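/- Let μ ≥ 0 and let N be a Poisson random variable with mean μ. Then for any δ ∈ (0,1), the probability that μ > U₊(N,δ) is at most δ, where U₊(N,δ) := 2·log(1/δ) + N + √(2·N·log(1/δ)). -/

import Mathlib

open MeasureTheory ProbabilityTheory Real
open scoped NNReal ENNReal

/-- Upper confidence bound: `U₊(N,δ) = 2·log(1/δ) + N + √(2·N·log(1/δ))`. -/
noncomputable def Uplus (N δ : ℝ) : ℝ :=
  2 * Real.log (1 / δ) + N + Real.sqrt (2 * N * Real.log (1 / δ))

open Finset Nat in
/-- Auxiliary: `log t ≤ (t - 1/t)/2` for `t ≥ 1`. -/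
lemma log_le_half_aux (t : ℝ) (ht : 1 ≤ t) : Real.log t ≤ (t - 1/t)/2 := by
  set f : ℝ → ℝ := fun x => (x - 1/x)/2 - Real.log x with hf
  have hder : ∀ x : ℝ, 0 < x → HasDerivAt f ((1/x - 1)^2/2) x := by
    intro x hxpos
    have h1 : HasDerivAt (fun x : ℝ => 1/x) (-(1/x^2)) x := by
      simpa using (hasDerivAt_inv (ne_of_gt hxpos))
    have h2 : HasDerivAt f ((1 - (-(1/x^2)))/2 - x⁻¹) x :=
      (((hasDerivAt_id x).sub h1).div_const 2).sub (Real.hasDerivAt_log (ne_of_gt hxpos))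
    convert h2 using 1
    field_simp
    ring
  have key : MonotoneOn f (Set.Ici 1) := by
    apply monotoneOn_of_deriv_nonneg (convex_Ici 1)
    · intro x hx
      exact (hder x (lt_of_lt_of_le one_pos hx)).continuousAt.continuousWithinAt
    · intro x hx
      have hx1 : (1:ℝ) < x := by simpa using hx
      exact ((hder x (lt_trans one_pos hx1)).differentiableAt).differentiableWithinAt
    · intro x hx
      have hx1 : (1:ℝ) < x := by simpa using hx
      rw [(hder x (lt_trans one_pos hx1)).deriv]
      positivity
  have := key (Set.mem_Ici.mpr le_rfl) (Set.mem_Ici.mpr ht) ht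
  simp only [hf, Real.log_one] at this
  norm_num at this
  rw [one_div]; linarith

open Finset Nat in
/-- Chernoff bound for the lower tail of the Poisson distribution. -/
lemma key_sum_aux (m L : ℝ) (K : ℕ) (hL : 0 < L)
    (hm : 2*L + K + Real.sqrt (2*K*L) < m) :
    ∑ n ∈ range (K+1), Real.exp (-m) * m^n / n ! ≤ Real.exp (-L) := by
  have hs0 : (0:ℝ) ≤ Real.sqrt (2*K*L) := Real.sqrt_nonneg _
  have hKn : (0:ℝ) ≤ (K:ℝ) := Nat.cast_nonneg K
  have hmK : (K:ℝ) < m := by linarith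
  have hmpos : 0 < m := by linarith
  have hgap : 2*m*L ≤ (m - K)^2 := by
    have hs2 : Real.sqrt (2*K*L) ^ 2 = 2*K*L := Real.sq_sqrt (by positivity)
    nlinarith [sq_nonneg (m - K - 2*L - Real.sqrt (2*K*L)), hs0, hL]
  rcases Nat.eq_zero_or_pos K with hK0 | hKpos
  · subst hK0
    simp only [zero_add, range_one, sum_singleton, pow_zero, Nat.factorial_zero,
      Nat.cast_one, mul_one]
    rw [div_one]
    apply Real.exp_le_exp.mpr
    simp only [Nat.cast_zero] at hm hgap
    nlinarith
  · have hKR : (0:ℝ) < K := by exact_mod_cast hKpos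
    set θ := Real.log (m / K) with hθ
    have hratio : (1:ℝ) ≤ m / K := le_of_lt ((one_lt_div hKR).mpr hmK)
    have hθ0 : 0 ≤ θ := Real.log_nonneg hratio
    have hexpθ : Real.exp (-θ) = K / m := by
      rw [hθ, Real.exp_neg, Real.exp_log (by positivity), inv_div]
    have hterm : ∀ n ∈ range (K+1),
        Real.exp (-m) * m^n / n ! ≤ Real.exp (θ*K - m) * ((K:ℝ)^n / n !) := by
      intro n hn
      have hnK : n ≤ K := Nat.lt_succ_iff.mp (mem_range.mp hn)
      have hfac : (0:ℝ) < n ! := by exact_mod_cast Nat.factorial_pos n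
      have hpow : m^n ≤ Real.exp (θ*K) * (K:ℝ)^n := by
        have hKpow : (K:ℝ)^n = m^n * Real.exp (-θ)^n := by
          rw [hexpθ, div_pow]
          field_simp
        rw [hKpow, ← Real.exp_nat_mul, ← mul_assoc, mul_comm (Real.exp (θ*K)) (m^n),
          mul_assoc, ← Real.exp_add]
        nth_rewrite 1 [← mul_one (m^n)]
        apply mul_le_mul_of_nonneg_left _ (by positivity)
        apply Real.one_le_exp
        have h : θ * K + n * (-θ) = θ * ((K:ℝ) - n) := by ring
        rw [h]
        have h2 : (0:ℝ) ≤ (K:ℝ) - n := by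
          have : (n:ℝ) ≤ K := by exact_mod_cast hnK
          linarith
        positivity
      calc Real.exp (-m) * m^n / n ! ≤ Real.exp (-m) * (Real.exp (θ*K) * (K:ℝ)^n) / n ! := by
            gcongr
        _ = Real.exp (θ*K - m) * ((K:ℝ)^n / n !) := by
            rw [Real.exp_sub, Real.exp_neg]
            field_simp
    calc ∑ n ∈ range (K+1), Real.exp (-m) * m^n / n !
        ≤ ∑ n ∈ range (K+1), Real.exp (θ*K - m) * ((K:ℝ)^n / n !) := sum_le_sum hterm
      _ = Real.exp (θ*K - m) * ∑ n ∈ range (K+1), ((K:ℝ)^n / n !) := by rw [mul_sum]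
      _ ≤ Real.exp (θ*K - m) * Real.exp K :=
            mul_le_mul_of_nonneg_left (Real.sum_le_exp_of_nonneg hKn _) (Real.exp_nonneg _)
      _ = Real.exp (θ*K + K - m) := by rw [← Real.exp_add]; ring_nf
      _ ≤ Real.exp (-L) := by
            apply Real.exp_le_exp.mpr
            have h1 : θ ≤ (m/K - K/m)/2 :=
              log_le_half_aux _ hratio |>.trans_eq (by rw [one_div, inv_div])
            have h2 : θ * K ≤ (m^2 - K^2)/(2*m) := by
              calc θ * K ≤ ((m/K - K/m)/2) * K := by
                    apply mul_le_mul_of_nonneg_right h1 hKn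
                _ = (m^2 - K^2)/(2*m) := by field_simp
            have h3 : (m^2 - (K:ℝ)^2)/(2*m) ≤ m - K - L := by
              rw [div_le_iff₀ (by positivity)]
              nlinarith [hgap]
            linarith

open Finset Nat in
/-- If `N ~ Poisson(μ)` with `μ ≥ 0` and `δ ∈ (0,1)`, then
`P[μ > U₊(N,δ)] ≤ δ`. -/
theorem poisson_upper_confidence (μ : ℝ≥0) (δ : ℝ) (hδ : δ ∈ Set.Ioo (0 : ℝ) 1) :
    poissonMeasure μ {n : ℕ | (μ : ℝ) > Uplus (n : ℝ) δ} ≤ ENNReal.ofReal δ := by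
  obtain ⟨hδ0, hδ1⟩ := hδ
  have hL : 0 < Real.log (1/δ) := Real.log_pos ((one_lt_one_div hδ0 hδ1))
  have hexpL : Real.exp (-Real.log (1/δ)) = δ := by
    rw [one_div, Real.log_inv, neg_neg, Real.exp_log hδ0]
  set S := {n : ℕ | (μ : ℝ) > Uplus (n : ℝ) δ} with hSdef
  have hSb : ∀ n ∈ S, (n:ℝ) < μ := by
    intro n hn
    have h1 : Uplus (n:ℝ) δ < μ := hn
    have h2 : (n:ℝ) ≤ Uplus (n:ℝ) δ := by
      unfold Uplus
      have := Real.sqrt_nonneg (2 * (n:ℝ) * Real.log (1/δ))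
      linarith
    linarith
  rcases Set.eq_empty_or_nonempty S with h | h
  · rw [h]
    simp
  · have hsub : S ⊆ ↑(Finset.range (⌈(μ:ℝ)⌉₊ + 1)) := by
      intro n hn
      simp only [coe_range, Set.mem_Iio]
      have : n < ⌈(μ:ℝ)⌉₊ := Nat.lt_ceil.mpr (hSb n hn)
      omega
    have hfin : S.Finite := Set.Finite.subset (Finset.finite_toSet _) hsub
    have hne : hfin.toFinset.Nonempty := by
      rwa [Set.Finite.toFinset_nonempty]
    set K := hfin.toFinset.max' hne with hK
    have hKS : K ∈ S := hfin.mem_toFinset.mp (hfin.toFinset.max'_mem hne)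
    have hSsub : S ⊆ ↑(Finset.range (K+1)) := by
      intro n hn
      simp only [coe_range, Set.mem_Iio]
      have : n ≤ K := hfin.toFinset.le_max' n (hfin.mem_toFinset.mpr hn)
      omega
    calc poissonMeasure μ S ≤ poissonMeasure μ ↑(Finset.range (K+1)) :=
          measure_mono hSsub
      _ = ∑ n ∈ range (K+1), poissonPMF μ n := by
          rw [← sum_measure_singleton]
          refine Finset.sum_congr rfl (fun n _ => ?_)
          rw [poissonMeasure_singleton, ← poissonPMFReal_ofReal_eq_poissonPMF]
          rfl
      _ = ∑ n ∈ range (K+1), ENNReal.ofReal (poissonPMFReal μ n) := rfl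
      _ = ENNReal.ofReal (∑ n ∈ range (K+1), poissonPMFReal μ n) :=
          (ENNReal.ofReal_sum_of_nonneg (fun n _ => poissonPMFReal_nonneg)).symm
      _ ≤ ENNReal.ofReal δ := by
          apply ENNReal.ofReal_le_ofReal
          rw [← hexpL]
          have hm : 2*Real.log (1/δ) + K + Real.sqrt (2*K*Real.log (1/δ)) < (μ:ℝ) := hKS
          have := key_sum_aux (μ:ℝ) (Real.log (1/δ)) K hL hm
          unfold poissonPMFReal
          convert this using 2 with n
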